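/- For any two smooth time-dependent vector fields X, Y on ℝⁿ and any integer m ≥ 0, the Lie bracket [X̃, Ỹ] of their time-prolongations to ℝ × (ℝⁿ)^{m+1} is the prolongation Ẑ of a time-dependent vector field Z on ℝⁿ; explicitly, one may take Z(t,x) = ∂Y/∂t(t,x) − ∂X/∂t(t,x) + D_xY(t,x)·X(t,x) − D_xX(t,x)·Y(t,x). -/

import Mathlib

/-- The prolongation of a time-dependent vector field `X` on `ℝⁿ` to `ℝ × (ℝⁿ)^{m+1}`:
`X̂(t,x₀,…,x_m) = (0, X(t,x₀), …, X(t,x_m))`. -/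
def prolong (n m : ℕ) (X : ℝ × (Fin n → ℝ) → (Fin n → ℝ)) :
    (ℝ × (Fin (m + 1) → Fin n → ℝ)) → ℝ × (Fin (m + 1) → Fin n → ℝ) :=
  fun p => (0, fun a => X (p.1, p.2 a))

/-- The time-prolongation of a time-dependent vector field `X` on `ℝⁿ` to `ℝ × (ℝⁿ)^{m+1}`:
`X̃(t,x₀,…,x_m) = (1, X(t,x₀), …, X(t,x_m))`. -/
def timeProlong (n m : ℕ) (X : ℝ × (Fin n → ℝ) → (Fin n → ℝ)) :
    (ℝ × (Fin (m + 1) → Fin n → ℝ)) → ℝ × (Fin (m + 1) → Fin n → ℝ) :=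
  fun p => (1, fun a => X (p.1, p.2 a))

/-- The Lie bracket of vector fields: `[A,B](p) = DB(p)·A(p) − DA(p)·B(p)`. -/
noncomputable def lieBr {E : Type*} [NormedAddCommGroup E] [NormedSpace ℝ E] (A B : E → E) : E → E :=
  fun p => fderiv ℝ B p (A p) - fderiv ℝ A p (B p)

section Aux

variable (n m : ℕ)

/-- The linear projection `(t, x₀, …, x_m) ↦ (t, x_a)`. -/
noncomputable def projA (a : Fin (m + 1)) :
    (ℝ × (Fin (m + 1) → Fin n → ℝ)) →L[ℝ] ℝ × (Fin n → ℝ) :=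
  (ContinuousLinearMap.fst ℝ ℝ (Fin (m + 1) → Fin n → ℝ)).prod
    ((ContinuousLinearMap.proj a).comp (ContinuousLinearMap.snd ℝ ℝ (Fin (m + 1) → Fin n → ℝ)))

theorem hasFDerivAt_timeProlong (X : ℝ × (Fin n → ℝ) → (Fin n → ℝ))
    (hX : ContDiff ℝ (⊤ : ℕ∞) X) (p : ℝ × (Fin (m + 1) → Fin n → ℝ)) :
    HasFDerivAt (timeProlong n m X)
      (((0 : (ℝ × (Fin (m + 1) → Fin n → ℝ)) →L[ℝ] ℝ)).prod
        (ContinuousLinearMap.pi fun a =>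
          (fderiv ℝ X (p.1, p.2 a)).comp (projA n m a))) p := by
  apply HasFDerivAt.prodMk
  · exact hasFDerivAt_const 1 p
  · apply hasFDerivAt_pi.2
    intro a
    exact ((hX.differentiable (by simp) (p.1, p.2 a)).hasFDerivAt).comp p
      ((projA n m a).hasFDerivAt)

end Aux

/-- The Lie bracket `[X̃, Ỹ]` of the time-prolongations of two smooth time-dependent vector
fields `X`, `Y` on `ℝⁿ` is the prolongation `Ẑ` of the time-dependent vector field
`Z(t,x) = ∂Y/∂t(t,x) − ∂X/∂t(t,x) + D_xY(t,x)·X(t,x) − D_xX(t,x)·Y(t,x)`. -/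
theorem lieBracket_timeProlong_eq_prolong (n m : ℕ)
    (X Y : ℝ × (Fin n → ℝ) → (Fin n → ℝ))
    (hX : ContDiff ℝ (⊤ : ℕ∞) X) (hY : ContDiff ℝ (⊤ : ℕ∞) Y) :
    lieBr (timeProlong n m X) (timeProlong n m Y) =
      prolong n m (fun q =>
        fderiv ℝ Y q (1, 0) - fderiv ℝ X q (1, 0)
          + fderiv ℝ Y q (0, X q) - fderiv ℝ X q (0, Y q)) := by
  funext p
  have hXd := (hasFDerivAt_timeProlong n m X hX p).fderiv
  have hYd := (hasFDerivAt_timeProlong n m Y hY p).fderiv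
  simp only [lieBr, hXd, hYd, prolong, timeProlong]
  refine Prod.ext (by simp) ?_
  funext a
  simp only [Prod.snd_sub, Pi.sub_apply, ContinuousLinearMap.prod_apply,
    ContinuousLinearMap.pi_apply, ContinuousLinearMap.comp_apply, projA,
    ContinuousLinearMap.coe_fst', ContinuousLinearMap.coe_snd',
    ContinuousLinearMap.proj_apply]
  have h1 : ((1 : ℝ), X (p.1, p.2 a)) = ((1 : ℝ), (0 : Fin n → ℝ)) + ((0 : ℝ), X (p.1, p.2 a)) := by
    simp
  have h2 : ((1 : ℝ), Y (p.1, p.2 a)) = ((1 : ℝ), (0 : Fin n → ℝ)) + ((0 : ℝ), Y (p.1, p.2 a)) := by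
    simp
  rw [h1, h2, map_add, map_add]
  abel
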